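/- Let p_{1,1},…,p_{1,k_1},…,p_{q,1},…,p_{q,k_q} be pairwise distinct prime numbers (each k_i ≥ 1), let ε_{i,j} ∈ {−1,+1} be arbitrary signs, and for each i set π_i = Σ_{j=1}^{k_i} ε_{i,j} √p_{i,j}. Then the subfield of ℝ generated over ℚ by π_1,…,π_q equals the subfield generated over ℚ by all the square roots √p_{i,j}, 1 ≤ i ≤ q, 1 ≤ j ≤ k_i. -/

import Mathlib

open IntermediateField Real



lemma sqrt_irr {m : ℕ} (hm : Squarefree m) (h1 : 1 < m) : Irrational (Real.sqrt m) := by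
  rw [irrational_sqrt_natCast_iff]
  rintro ⟨a, rfl⟩
  have ha : a = 1 := Nat.isUnit_iff.mp (hm a (dvd_refl _))
  subst ha; simp at h1

lemma quadExt (K' : IntermediateField ℚ ℝ) (t : ℝ) (h2 : t * t ∈ K') (h1 : t ∉ K') :
    ∃ S : IntermediateField ℚ ℝ, K' ≤ S ∧ t ∈ S ∧
      ∀ x ∈ S, ∃ a ∈ K', ∃ b ∈ K', x = a + b * t := by
  refine ⟨{ carrier := {x | ∃ a ∈ K', ∃ b ∈ K', x = a + b * t}
            mul_mem' := ?_
            one_mem' := ⟨1, one_mem _, 0, zero_mem _, by ring⟩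
            add_mem' := ?_
            zero_mem' := ⟨0, zero_mem _, 0, zero_mem _, by ring⟩
            algebraMap_mem' := fun r => ⟨algebraMap ℚ ℝ r, IntermediateField.algebraMap_mem _ _, 0, zero_mem _, by ring⟩
            inv_mem' := ?_ }, ?_, ?_, ?_⟩
  · rintro x y ⟨a, ha, b, hb, rfl⟩ ⟨c, hc, d, hd, rfl⟩
    exact ⟨a * c + b * d * (t * t), add_mem (mul_mem ha hc) (mul_mem (mul_mem hb hd) h2),
      a * d + b * c, add_mem (mul_mem ha hd) (mul_mem hb hc), by ring⟩
  · rintro x y ⟨a, ha, b, hb, rfl⟩ ⟨c, hc, d, hd, rfl⟩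
    exact ⟨a + c, add_mem ha hc, b + d, add_mem hb hd, by ring⟩
  · rintro x ⟨a, ha, b, hb, rfl⟩
    by_cases hx : a + b * t = 0
    · exact ⟨0, zero_mem _, 0, zero_mem _, by rw [hx]; simp⟩
    · set d := a * a - b * b * (t * t) with hd_def
      have hd : d ≠ 0 := by
        intro h
        rw [hd_def] at h
        by_cases hb0 : b = 0
        · apply hx
          have ha0 : a = 0 := by
            rw [hb0] at h; ring_nf at h
            exact mul_self_eq_zero.mp (by nlinarith [h])
          rw [ha0, hb0]; ring
        · have h' : (a - b * t) * (a + b * t) = 0 := by nlinarith [h]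
          rcases mul_eq_zero.mp h' with h'' | h''
          · apply h1
            have : t = a / b := by field_simp; linarith
            rw [this]; exact div_mem ha hb
          · exact hx h''
      refine ⟨a / d, div_mem ha (sub_mem (mul_mem ha ha) (mul_mem (mul_mem hb hb) h2)),
        -b / d, div_mem (neg_mem hb) (sub_mem (mul_mem ha ha) (mul_mem (mul_mem hb hb) h2)), ?_⟩
      have hmul : (a + b * t) * (a / d + -b / d * t) = 1 := by
        field_simp
        nlinarith [hd_def]
      exact inv_eq_of_mul_eq_one_right hmul
  · intro x hx
    exact ⟨x, hx, 0, zero_mem _, by ring⟩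
  · exact ⟨0, zero_mem _, 1, one_mem _, by ring⟩
  · rintro x ⟨a, ha, b, hb, rfl⟩
    exact ⟨a, ha, b, hb, rfl⟩


lemma keyP (s : Finset ℕ) : (∀ r ∈ s, Nat.Prime r) → ∀ m : ℕ, Squarefree m → 1 < m →
    (∀ r ∈ s, ¬ r ∣ m) →
    Real.sqrt m ∉ IntermediateField.adjoin ℚ ((fun r : ℕ => Real.sqrt r) '' ↑s) := by
  induction s using Finset.induction_on with
  | empty =>
    intro _ m hm h1 _ hmem
    simp only [Finset.coe_empty, Set.image_empty, IntermediateField.adjoin_empty] at hmem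
    rw [IntermediateField.mem_bot] at hmem
    obtain ⟨r, hr⟩ := hmem
    exact sqrt_irr hm h1 ⟨r, by exact_mod_cast hr⟩
  | @insert a s' ha ih =>
    intro hprime m hm h1 hdvd hmem
    have haP : a.Prime := hprime a (Finset.mem_insert_self a s')
    have hprime' : ∀ r ∈ s', Nat.Prime r := fun r hr => hprime r (Finset.mem_insert_of_mem hr)
    set K' := IntermediateField.adjoin ℚ ((fun r : ℕ => Real.sqrt r) '' ↑s') with hK'
    have hta : Real.sqrt a ∉ K' := by
      apply ih hprime' a haP.squarefree haP.one_lt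
      intro r hr hra
      exact ha (((Nat.prime_dvd_prime_iff_eq (hprime' r hr) haP).mp hra) ▸ hr)
    have ht2 : Real.sqrt a * Real.sqrt a ∈ K' := by
      rw [Real.mul_self_sqrt (by positivity)]
      exact_mod_cast _root_.natCast_mem K' a
    obtain ⟨S, hKS, htS, hform⟩ := quadExt K' (Real.sqrt a) ht2 hta
    have hsub : IntermediateField.adjoin ℚ ((fun r : ℕ => Real.sqrt r) '' ↑(insert a s')) ≤ S := by
      rw [IntermediateField.adjoin_le_iff]
      rintro x ⟨r, hr, rfl⟩
      rcases Finset.mem_insert.mp (by exact_mod_cast hr) with rfl | hr'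
      · exact htS
      · exact hKS (IntermediateField.subset_adjoin ℚ _ ⟨r, by exact_mod_cast hr', rfl⟩)
    obtain ⟨x, hx, y, hy, hxy⟩ := hform _ (hsub hmem)
    -- (x + y √a)^2 = m
    have hsq : (x + y * Real.sqrt a) ^ 2 = (m : ℝ) := by
      rw [← hxy, Real.sq_sqrt (by positivity)]
    have hta2 : Real.sqrt a ^ 2 = (a : ℝ) := Real.sq_sqrt (by positivity)
    by_cases hy0 : y = 0
    · -- √m = x ∈ K'
      apply ih hprime' m hm h1 (fun r hr => hdvd r (Finset.mem_insert_of_mem hr))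
      rw [hxy, hy0]
      simpa using hx
    by_cases hx0 : x = 0
    · -- √(m*a) = y * a ∈ K'
      have hma : Real.sqrt (m * a : ℕ) = y * a := by
        push_cast
        rw [Real.sqrt_mul (by positivity), hxy, hx0]
        rw [zero_add, mul_assoc, Real.mul_self_sqrt (by positivity)]
      have ham : ¬ a ∣ m := hdvd a (Finset.mem_insert_self a s')
      have hcop : Nat.Coprime a m := (Nat.Prime.coprime_iff_not_dvd haP).mpr ham
      apply ih hprime' (m * a)
        (Nat.squarefree_mul_iff.mpr ⟨hcop.symm, hm, haP.squarefree⟩)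
        (by nlinarith [haP.one_lt])
        (fun r hr hrdvd => by
          rcases (Nat.Prime.dvd_mul (hprime' r hr)).mp hrdvd with h' | h'
          · exact hdvd r (Finset.mem_insert_of_mem hr) h'
          · exact ha (((Nat.prime_dvd_prime_iff_eq (hprime' r hr) haP).mp h') ▸ hr))
      rw [hma]
      exact mul_mem hy (by exact_mod_cast _root_.natCast_mem K' a)
    · -- both nonzero: √a ∈ K', contradiction
      apply hta
      have key : Real.sqrt a = ((m : ℝ) - x ^ 2 - y ^ 2 * a) / (2 * x * y) := by
        field_simp
        nlinarith [hsq, hta2]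
      rw [key]
      exact div_mem (sub_mem (sub_mem (by exact_mod_cast _root_.natCast_mem K' m) (pow_mem hx 2))
        (mul_mem (pow_mem hy 2) (by exact_mod_cast _root_.natCast_mem K' a)))
        (mul_mem (mul_mem (by exact_mod_cast _root_.ofNat_mem K' 2) hx) hy)


lemma sqrtLI {n : ℕ} (p : Fin n → ℕ) (hp : ∀ j, (p j).Prime) (hinj : Function.Injective p)
    (c : Fin n → ℚ) (hsum : ∑ j, (c j : ℝ) * Real.sqrt (p j) = 0) : ∀ j, c j = 0 := by
  by_contra hc
  push_neg at hc
  obtain ⟨j0, hj0⟩ := hc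
  set s : Finset ℕ := (Finset.univ.image p).erase (p j0) with hs
  have hmem : Real.sqrt (p j0) ∈ IntermediateField.adjoin ℚ ((fun r : ℕ => Real.sqrt r) '' ↑s) := by
    have h2 : (c j0 : ℝ) * Real.sqrt (p j0) + ∑ j ∈ Finset.univ.erase j0, (c j : ℝ) * Real.sqrt (p j) = 0 := by
      rw [← Finset.add_sum_erase _ _ (Finset.mem_univ j0)] at hsum
      exact hsum
    have hc0 : (c j0 : ℝ) ≠ 0 := by exact_mod_cast hj0
    have heq : Real.sqrt (p j0) = ∑ j ∈ Finset.univ.erase j0, ((-(c j) / c j0 : ℚ) : ℝ) * Real.sqrt (p j) := by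
      have hstep : ∑ j ∈ Finset.univ.erase j0, ((-(c j) / c j0 : ℚ) : ℝ) * Real.sqrt (p j)
          = (-(c j0 : ℝ))⁻¹ * ∑ j ∈ Finset.univ.erase j0, (c j : ℝ) * Real.sqrt (p j) := by
        rw [Finset.mul_sum]
        apply Finset.sum_congr rfl
        intro j _
        have hco : ((-(c j) / c j0 : ℚ) : ℝ) = (-(c j0 : ℝ))⁻¹ * (c j : ℝ) := by
          push_cast
          rw [← neg_inv, div_eq_mul_inv]
          ring
        rw [hco, mul_assoc]
      rw [hstep]
      have hS : ∑ j ∈ Finset.univ.erase j0, (c j : ℝ) * Real.sqrt (p j)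
          = -((c j0 : ℝ) * Real.sqrt (p j0)) := by linarith
      rw [hS]
      field_simp
    rw [heq]
    apply sum_mem
    intro j hj
    have hpj : p j ∈ s := by
      rw [hs]
      refine Finset.mem_erase.mpr ⟨fun h => ?_, Finset.mem_image_of_mem p (Finset.mem_univ j)⟩
      exact Finset.ne_of_mem_erase hj (hinj h)
    have : Real.sqrt (p j) ∈ IntermediateField.adjoin ℚ ((fun r : ℕ => Real.sqrt r) '' ↑s) :=
      IntermediateField.subset_adjoin ℚ _ ⟨p j, by exact_mod_cast hpj, rfl⟩
    have halg : ((-(c j) / c j0 : ℚ) : ℝ) ∈ IntermediateField.adjoin ℚ ((fun r : ℕ => Real.sqrt r) '' ↑s) := by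
      have := IntermediateField.algebraMap_mem (IntermediateField.adjoin ℚ ((fun r : ℕ => Real.sqrt r) '' ↑(s))) (-(c j) / c j0)
      exact_mod_cast this
    exact mul_mem halg this
  exact keyP s (fun r hr => by
      obtain ⟨j, _, rfl⟩ := Finset.mem_image.mp (Finset.mem_of_mem_erase hr)
      exact hp j)
    (p j0) (hp j0).squarefree (hp j0).one_lt
    (fun r hr hdvd => by
      obtain ⟨j, _, rfl⟩ := Finset.mem_image.mp (Finset.mem_of_mem_erase hr)
      have := (Nat.prime_dvd_prime_iff_eq (hp j) (hp j0)).mp hdvd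
      exact Finset.ne_of_mem_erase hr (this ▸ rfl)) hmem


/-- For pairwise distinct primes `p i j` (each `k i ≥ 1`) and
signs `ε i j ∈ {−1, +1}`, with `π i = ∑ j, ε i j * √(p i j)`, the subfield of `ℝ`
generated over `ℚ` by `π_1, …, π_q` equals the subfield generated over `ℚ` by all
the square roots `√(p i j)`. -/
theorem stmt_2 (q : ℕ) (k : Fin q → ℕ) (hk : ∀ i, 1 ≤ k i)
    (p : (i : Fin q) → Fin (k i) → ℕ) (hp : ∀ i j, (p i j).Prime)
    (hinj : Function.Injective fun x : Σ i : Fin q, Fin (k i) => p x.1 x.2)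
    (ε : (i : Fin q) → Fin (k i) → ℝ) (hε : ∀ i j, ε i j = 1 ∨ ε i j = -1) :
    IntermediateField.adjoin ℚ
        (Set.range fun i : Fin q => ∑ j, ε i j * Real.sqrt (p i j)) =
      IntermediateField.adjoin ℚ
        {x : ℝ | ∃ (i : Fin q) (j : Fin (k i)), x = Real.sqrt (p i j)} := by
  classical
  set T : Set ℝ := {x : ℝ | ∃ i j, x = Real.sqrt (p i j)} with hT
  set L : IntermediateField ℚ ℝ := IntermediateField.adjoin ℚ T with hL
  set F : IntermediateField ℚ ℝ := IntermediateField.adjoin ℚ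
    (Set.range fun i : Fin q => ∑ j, ε i j * Real.sqrt (p i j)) with hF
  have hsqmem : ∀ i j, Real.sqrt (p i j) ∈ L := fun i j =>
    IntermediateField.subset_adjoin ℚ T ⟨i, j, rfl⟩
  have hπL : ∀ i, (∑ j, ε i j * Real.sqrt (p i j)) ∈ L := by
    intro i
    apply sum_mem
    intro j _
    rcases hε i j with h | h
    · rw [h, one_mul]; exact hsqmem i j
    · rw [h, neg_one_mul]; exact neg_mem (hsqmem i j)
  have hFL : F ≤ L := by
    rw [hF, IntermediateField.adjoin_le_iff]
    rintro x ⟨i, rfl⟩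
    exact hπL i
  -- integrality of the square roots
  have hint : ∀ i j, IsIntegral ℚ (Real.sqrt (p i j)) := by
    intro i j
    refine ⟨Polynomial.X ^ 2 - Polynomial.C ((p i j : ℚ)), Polynomial.monic_X_pow_sub_C _ two_ne_zero, ?_⟩
    simp [Polynomial.eval₂_sub, Real.sq_sqrt (by positivity : (0:ℝ) ≤ (p i j : ℕ))]
  have hTfin : T.Finite := by
    have hsub : T ⊆ Set.range (fun x : Σ i : Fin q, Fin (k i) => Real.sqrt (p x.1 x.2)) := by
      rintro x ⟨i, j, rfl⟩; exact ⟨⟨i, j⟩, rfl⟩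
    exact (Set.finite_range _).subset hsub
  haveI : Finite T := hTfin.to_subtype
  haveI hLfd : FiniteDimensional ℚ L := by
    apply IntermediateField.finiteDimensional_adjoin
    rintro x ⟨i, j, rfl⟩
    exact hint i j
  haveI hFfd : FiniteDimensional ℚ F := by
    haveI : Finite (Set.range fun i : Fin q => ∑ j, ε i j * Real.sqrt (p i j)) :=
      (Set.finite_range _).to_subtype
    apply IntermediateField.finiteDimensional_adjoin
    rintro x ⟨i, rfl⟩
    apply IsIntegral.sum
    intro j _
    rcases hε i j with h | h
    · rw [h, one_mul]; exact hint i j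
    · rw [h, neg_one_mul]; exact (hint i j).neg
  -- restriction of algebra homs is injective
  have hres_inj : Function.Injective
      (fun σ : L →ₐ[ℚ] ℂ => σ.comp (IntermediateField.inclusion hFL)) := by
    intro σ τ h
    -- dichotomy for images of square roots
    have dich : ∀ (σ : L →ₐ[ℚ] ℂ) i j,
        σ ⟨Real.sqrt (p i j), hsqmem i j⟩ = ((Real.sqrt (p i j) : ℝ) : ℂ) ∨
        σ ⟨Real.sqrt (p i j), hsqmem i j⟩ = -((Real.sqrt (p i j) : ℝ) : ℂ) := by
      intro σ i j
      set x : L := ⟨Real.sqrt (p i j), hsqmem i j⟩ with hx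
      have hx2 : x * x = algebraMap ℚ L ((p i j : ℚ)) := by
        apply Subtype.ext
        push_cast
        show Real.sqrt (p i j) * Real.sqrt (p i j) = _
        rw [Real.mul_self_sqrt (by positivity)]
      have h2 : σ x * σ x = (((p i j : ℕ) : ℝ) : ℂ) := by
        rw [← map_mul, hx2]
        simp [AlgHom.commutes]
      have hc2 : (((Real.sqrt (p i j) : ℝ) : ℂ)) * (((Real.sqrt (p i j) : ℝ) : ℂ)) = (((p i j : ℕ) : ℝ) : ℂ) := by
        rw [← Complex.ofReal_mul, Real.mul_self_sqrt (by positivity)]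
      have : (σ x - ((Real.sqrt (p i j) : ℝ) : ℂ)) * (σ x + ((Real.sqrt (p i j) : ℝ) : ℂ)) = 0 := by
        rw [sub_mul, mul_add, mul_add, h2, ← hc2]; ring
      rcases mul_eq_zero.mp this with h' | h'
      · left; linear_combination h'
      · right; linear_combination h'
    -- signs
    set c : (i : Fin q) → Fin (k i) → ℂ := fun i j => ((Real.sqrt (p i j) : ℝ) : ℂ) with hc
    set dσ : (i : Fin q) → Fin (k i) → ℚ := fun i j =>
      if σ ⟨Real.sqrt (p i j), hsqmem i j⟩ = c i j then 1 else -1 with hdσ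
    set dτ : (i : Fin q) → Fin (k i) → ℚ := fun i j =>
      if τ ⟨Real.sqrt (p i j), hsqmem i j⟩ = c i j then 1 else -1 with hdτ
    have hdσ_eq : ∀ i j, σ ⟨Real.sqrt (p i j), hsqmem i j⟩ = ((dσ i j : ℚ) : ℂ) * c i j := by
      intro i j
      by_cases h' : σ ⟨Real.sqrt (p i j), hsqmem i j⟩ = c i j
      · rw [hdσ]; simp only [h', if_pos]; simp [h']
      · rcases dich σ i j with h'' | h''
        · exact absurd h'' h'
        · rw [hdσ]; simp only [h', if_neg, not_false_iff]; simp [h'']; rfl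
    have hdτ_eq : ∀ i j, τ ⟨Real.sqrt (p i j), hsqmem i j⟩ = ((dτ i j : ℚ) : ℂ) * c i j := by
      intro i j
      by_cases h' : τ ⟨Real.sqrt (p i j), hsqmem i j⟩ = c i j
      · rw [hdτ]; simp only [h', if_pos]; simp [h']
      · rcases dich τ i j with h'' | h''
        · exact absurd h'' h'
        · rw [hdτ]; simp only [h', if_neg, not_false_iff]; simp [h'']; rfl
    -- rational version of the signs ε
    set e : (i : Fin q) → Fin (k i) → ℚ := fun i j => if ε i j = 1 then 1 else -1 with he
    have he_eq : ∀ i j, ((e i j : ℚ) : ℝ) = ε i j := by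
      intro i j
      rcases hε i j with h' | h'
      · rw [he]; simp [h']
      · rw [he]
        simp only [h']
        norm_num
    -- σ and τ agree on each generator
    have gen_eq : ∀ i j, σ ⟨Real.sqrt (p i j), hsqmem i j⟩ = τ ⟨Real.sqrt (p i j), hsqmem i j⟩ := by
      intro i j
      -- the element π i inside L
      have hπF : (∑ j, ε i j * Real.sqrt (p i j)) ∈ F :=
        IntermediateField.subset_adjoin ℚ _ ⟨i, rfl⟩
      have hππ : σ ⟨_, hFL hπF⟩ = τ ⟨_, hFL hπF⟩ := by
        have := congrArg (fun φ : F →ₐ[ℚ] ℂ => φ ⟨_, hπF⟩) h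
        exact this
      -- decompose π i as a sum inside L
      have hdecomp : (⟨_, hFL hπF⟩ : L) =
          ∑ j' : Fin (k i), algebraMap ℚ L (e i j') * ⟨Real.sqrt (p i j'), hsqmem i j'⟩ := by
        apply Subtype.ext
        push_cast
        apply Finset.sum_congr rfl
        intro j' _
        rw [← he_eq i j']
        norm_cast
      have hσπ : σ ⟨_, hFL hπF⟩ = ∑ j' : Fin (k i), ((e i j' : ℚ) : ℂ) * (((dσ i j' : ℚ) : ℂ) * c i j') := by
        rw [hdecomp, map_sum]
        apply Finset.sum_congr rfl
        intro j' _
        rw [map_mul, hdσ_eq i j', AlgHom.commutes]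
        norm_cast
      have hτπ : τ ⟨_, hFL hπF⟩ = ∑ j' : Fin (k i), ((e i j' : ℚ) : ℂ) * (((dτ i j' : ℚ) : ℂ) * c i j') := by
        rw [hdecomp, map_sum]
        apply Finset.sum_congr rfl
        intro j' _
        rw [map_mul, hdτ_eq i j', AlgHom.commutes]
        norm_cast
      -- derive the real linear relation
      have hrel : ∑ j' : Fin (k i), ((e i j' * (dσ i j' - dτ i j') : ℚ) : ℝ) * Real.sqrt (p i j') = 0 := by
        have hcx : (((∑ j' : Fin (k i), ((e i j' * (dσ i j' - dτ i j') : ℚ) : ℝ) * Real.sqrt (p i j') : ℝ)) : ℂ) = 0 := by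
          have h0 : (∑ j' : Fin (k i), ((e i j' : ℚ) : ℂ) * (((dσ i j' : ℚ) : ℂ) * c i j')) -
              (∑ j' : Fin (k i), ((e i j' : ℚ) : ℂ) * (((dτ i j' : ℚ) : ℂ) * c i j')) = 0 := by
            rw [← hσπ, ← hτπ, hππ]; ring
          rw [← Finset.sum_sub_distrib] at h0
          rw [← h0]
          push_cast
          apply Finset.sum_congr rfl
          intro j' _
          simp only [hc]
          push_cast
          ring
        exact_mod_cast hcx
      have hLI := sqrtLI (fun j' => p i j') (fun j' => hp i j')
        (fun j1 j2 h12 => by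
          have := hinj (a₁ := ⟨i, j1⟩) (a₂ := ⟨i, j2⟩) h12
          simpa using this)
        (fun j' => e i j' * (dσ i j' - dτ i j')) hrel j
      have hez : e i j ≠ 0 := by
        rcases hε i j with h' | h' <;> norm_num [he, h']
      have : dσ i j = dτ i j := by
        have := mul_eq_zero.mp hLI
        rcases this with h' | h'
        · exact absurd h' hez
        · linarith [sub_eq_zero.mp h']
      rw [hdσ_eq i j, hdτ_eq i j, this]
    -- conclude σ = τ
    exact IntermediateField.adjoin_algHom_ext (F := ℚ) (s := T)
      (fun x hx => by obtain ⟨i, j, rfl⟩ := hx; exact gen_eq i j)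
  -- count embeddings
  haveI : Algebra.IsAlgebraic ℚ L := Algebra.IsAlgebraic.of_finite ℚ L
  haveI : Algebra.IsAlgebraic ℚ F := Algebra.IsAlgebraic.of_finite ℚ F
  have hcard1 : Fintype.card (L →ₐ[ℚ] ℂ) = Module.finrank ℚ L := AlgHom.card ℚ L ℂ
  have hcard2 : Fintype.card (F →ₐ[ℚ] ℂ) = Module.finrank ℚ F := AlgHom.card ℚ F ℂ
  have hle : Module.finrank ℚ L ≤ Module.finrank ℚ F := by
    rw [← hcard1, ← hcard2]
    exact Fintype.card_le_of_injective _ hres_inj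
  exact (IntermediateField.eq_of_le_of_finrank_le hFL hle)
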